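/- Let A₀, …, A_{r−1} be XP operators of precision N with binary x-components, let S_Z be a set of diagonal XP operators of precision N, and let G be the subgroup of the group of invertible 2^n × 2^n complex matrices generated by {A₀, …, A_{r−1}} ∪ S_Z. Let e : Fin n → Fin 2 be a bit string such that B.mulVec |e⟩ = |e⟩ for every diagonal matrix B ∈ G. Then the orbit state O|e⟩ := ∑ over v : Fin r → Fin 2 of (A₀^(v 0) * A₁^(v 1) * ⋯ * A_{r−1}^(v (r−1))).mulVec |e⟩ (product taken in increasing order of the index) is fixed by every element of G: for all M ∈ G, M.mulVec (O|e⟩) = O|e⟩. -/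

import Mathlib

open Matrix

/-- `ω = exp(πi/N)`. -/
noncomputable def omN (N : ℕ) : ℂ := Complex.exp (Real.pi * Complex.I / N)

/-- The Pauli X matrix. -/
def Xm : Matrix (Fin 2) (Fin 2) ℂ := !![0, 1; 1, 0]

/-- The precision-`N` phase matrix `P = diag(1, ω²)`. -/
noncomputable def Pm (N : ℕ) : Matrix (Fin 2) (Fin 2) ℂ := !![1, 0; 0, (omN N) ^ 2]

/-- The precision-`N` XP operator `XP_N(p|x|z)` on `n` qubits, the matrix indexed by bit
strings whose `(f, e)` entry is `ω^p * ∏ i, (X^(x i) * P^(z i)) (f i) (e i)`. -/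
noncomputable def XP (N n : ℕ) (p : ℤ) (x z : Fin n → ℤ) :
    Matrix (Fin n → Fin 2) (Fin n → Fin 2) ℂ :=
  Matrix.of fun f e => (omN N) ^ p * ∏ i, ((Xm ^ (x i)) * (Pm N) ^ (z i)) (f i) (e i)

/-- The antisymmetric operator `D_N(z) = XP_N(∑ i, z i | 0 | -z)`. -/
noncomputable def DN (N n : ℕ) (z : Fin n → ℤ) :
    Matrix (Fin n → Fin 2) (Fin n → Fin 2) ℂ :=
  XP N n (∑ i, z i) 0 (-z)

/-- A vector is binary if every entry is 0 or 1. -/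
def IsBinary {n : ℕ} (x : Fin n → ℤ) : Prop := ∀ i, x i = 0 ∨ x i = 1

namespace OrbitAux

lemma omN_ne_zero (N : ℕ) : omN N ≠ 0 := Complex.exp_ne_zero _

/-- parity of an integer as an element of `Fin 2` -/
def par (a : ℤ) : Fin 2 := if a % 2 = 0 then 0 else 1

lemma par_even {a : ℤ} (h : Even a) : par a = 0 := by
  simp [par, Int.even_iff.mp h]

lemma par_odd {a : ℤ} (h : Odd a) : par a = 1 := by
  simp [par, Int.odd_iff.mp h]

lemma fin2_add_self : ∀ a : Fin 2, a + a = 0 := by decide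

lemma vec_add_self {n : ℕ} (t : Fin n → Fin 2) : t + t = 0 :=
  funext fun i => fin2_add_self (t i)

lemma vec_add_add_self {n : ℕ} (e t : Fin n → Fin 2) : e + t + t = e := by
  rw [add_assoc, vec_add_self, add_zero]

lemma Xm_mul_Xm : Xm * Xm = 1 := by
  ext i j
  fin_cases i <;> fin_cases j <;>
    simp [Xm, Matrix.mul_apply, Fin.sum_univ_two, Matrix.one_apply]

lemma Xm_det : IsUnit Xm.det := by
  have : Xm.det = -1 := by simp [Xm, Matrix.det_fin_two_of]
  rw [this]
  exact isUnit_one.neg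

lemma Xm_zpow (a : ℤ) : Xm ^ a = if Even a then 1 else Xm := by
  rcases Int.even_or_odd a with h | h
  · rw [if_pos h]
    obtain ⟨k, hk⟩ := h
    have hk' : a = 2 * k := by omega
    rw [hk', Matrix.zpow_mul Xm Xm_det 2 k]
    have h2 : Xm ^ (2 : ℤ) = 1 := by
      rw [show (2 : ℤ) = ((2 : ℕ) : ℤ) by norm_num, zpow_natCast, pow_two, Xm_mul_Xm]
    rw [h2, Matrix.one_zpow]
  · rw [if_neg (Int.not_even_iff_odd.2 h)]
    obtain ⟨k, hk⟩ := h
    rw [hk, Matrix.zpow_add Xm_det (2 * k) 1, Matrix.zpow_mul Xm Xm_det 2 k]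
    have h2 : Xm ^ (2 : ℤ) = 1 := by
      rw [show (2 : ℤ) = ((2 : ℕ) : ℤ) by norm_num, zpow_natCast, pow_two, Xm_mul_Xm]
    rw [h2, Matrix.one_zpow, one_mul, zpow_one]

lemma Xm_apply (f e : Fin 2) : Xm f e = if f = e + 1 then 1 else 0 := by
  fin_cases f <;> fin_cases e <;> simp [Xm] <;> decide

lemma Pm_diag (N : ℕ) : Pm N = Matrix.diagonal ![1, (omN N) ^ 2] := by
  ext i j
  fin_cases i <;> fin_cases j <;> simp [Pm, Matrix.diagonal]

lemma Pm_zpow (N : ℕ) (b : ℤ) :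
    ∃ d : Fin 2 → ℂ, (∀ k, d k ≠ 0) ∧ Pm N ^ b = Matrix.diagonal d := by
  have hpd : ∀ k : Fin 2, (![1, (omN N) ^ 2] : Fin 2 → ℂ) k ≠ 0 := by
    intro k
    fin_cases k
    · simp
    · simp only [Matrix.cons_val_one, Matrix.head_cons]
      exact pow_ne_zero _ (omN_ne_zero N)
  rcases b with k | k
  · refine ⟨fun j => (![1, (omN N) ^ 2] j) ^ k, fun j => pow_ne_zero _ (hpd j), ?_⟩
    rw [Int.ofNat_eq_coe, zpow_natCast, Pm_diag, Matrix.diagonal_pow]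
    rfl
  · refine ⟨fun j => ((![1, (omN N) ^ 2] j) ^ (k + 1))⁻¹,
      fun j => inv_ne_zero (pow_ne_zero _ (hpd j)), ?_⟩
    rw [zpow_negSucc, Pm_diag, Matrix.diagonal_pow]
    apply Matrix.inv_eq_right_inv
    rw [Matrix.diagonal_mul_diagonal, ← Matrix.diagonal_one]
    have : (fun i => (![1, (omN N) ^ 2] ^ (k + 1)) i * ((![1, (omN N) ^ 2] i ^ (k + 1)))⁻¹)
        = fun _ : Fin 2 => (1 : ℂ) := by
      funext j
      rw [Pi.pow_apply]
      exact mul_inv_cancel₀ (pow_ne_zero _ (hpd j))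
    rw [this]

lemma qubit_entry (N : ℕ) (x z : ℤ) :
    ∃ d : Fin 2 → ℂ, (∀ k, d k ≠ 0) ∧
      ∀ f e : Fin 2, (Xm ^ x * Pm N ^ z) f e = if f = e + par x then d e else 0 := by
  obtain ⟨d, hd0, hd⟩ := Pm_zpow N z
  refine ⟨d, hd0, fun f e => ?_⟩
  rw [Xm_zpow, hd]
  rcases Int.even_or_odd x with h | h
  · rw [if_pos h, par_even h, add_zero, one_mul, Matrix.diagonal_apply]
    by_cases hfe : f = e
    · subst hfe; simp
    · simp [hfe, Ne.symm hfe]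
  · rw [if_neg (Int.not_even_iff_odd.2 h), par_odd h, Matrix.mul_diagonal, Xm_apply,
      ite_mul, one_mul, zero_mul]

end OrbitAux

namespace OrbitAux

variable {n : ℕ}

/-- `Shifted M t`: every column `e` of `M` is a nonzero multiple of the basis vector `e + t`. -/
def Shifted (M : Matrix (Fin n → Fin 2) (Fin n → Fin 2) ℂ) (t : Fin n → Fin 2) : Prop :=
  ∀ e, ∃ c : ℂ, c ≠ 0 ∧ M.mulVec (Pi.single e 1) = c • (Pi.single (e + t) 1 : (Fin n → Fin 2) → ℂ)

lemma matrix_ext_col {M M' : Matrix (Fin n → Fin 2) (Fin n → Fin 2) ℂ}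
    (h : ∀ e, M.mulVec (Pi.single e 1) = M'.mulVec (Pi.single e 1)) : M = M' := by
  ext f g
  have := congrFun (h g) f
  simpa using this

lemma Shifted.mul {M M' : Matrix (Fin n → Fin 2) (Fin n → Fin 2) ℂ} {t t' : Fin n → Fin 2}
    (hM : Shifted M t) (hM' : Shifted M' t') : Shifted (M * M') (t + t') := by
  intro e
  obtain ⟨c', hc'0, hc'⟩ := hM' e
  obtain ⟨c, hc0, hc⟩ := hM (e + t')
  refine ⟨c' * c, mul_ne_zero hc'0 hc0, ?_⟩
  rw [← Matrix.mulVec_mulVec, hc', Matrix.mulVec_smul, hc, smul_smul]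
  rw [show e + t' + t = e + (t + t') by rw [add_assoc, add_comm t' t]]

lemma Shifted.one : Shifted (1 : Matrix (Fin n → Fin 2) (Fin n → Fin 2) ℂ) 0 := by
  intro e
  exact ⟨1, one_ne_zero, by rw [Matrix.one_mulVec, add_zero, one_smul]⟩

lemma Shifted.pow {M : Matrix (Fin n → Fin 2) (Fin n → Fin 2) ℂ} {t : Fin n → Fin 2}
    (hM : Shifted M t) (k : ℕ) : Shifted (M ^ k) (k • t) := by
  induction k with
  | zero => simpa using Shifted.one
  | succ m ih =>
      rw [pow_succ', succ_nsmul']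
      exact hM.mul ih

lemma Shifted.isUnit {M : Matrix (Fin n → Fin 2) (Fin n → Fin 2) ℂ} {t : Fin n → Fin 2}
    (hM : Shifted M t) : IsUnit M := by
  choose c hc0 hc using hM
  set M' : Matrix (Fin n → Fin 2) (Fin n → Fin 2) ℂ :=
    Matrix.of (fun f e => if f = e + t then (c (e + t))⁻¹ else 0) with hM'def
  have hcol : ∀ e, M'.mulVec (Pi.single e 1) = (c (e + t))⁻¹ • (Pi.single (e + t) 1 : (Fin n → Fin 2) → ℂ) := by
    intro e
    funext f
    rw [Matrix.mulVec_single]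
    simp only [hM'def, MulOpposite.op_one, one_smul, Matrix.col_apply, Matrix.of_apply, mul_one, Pi.smul_apply, Pi.single_apply, smul_eq_mul]
    by_cases hf : f = e + t
    · rw [if_pos hf, if_pos hf, mul_one]
    · rw [if_neg hf, if_neg hf, mul_zero]
  have hMN : M * M' = 1 := by
    apply matrix_ext_col
    intro e
    rw [← Matrix.mulVec_mulVec, hcol, Matrix.mulVec_smul, hc, smul_smul,
      inv_mul_cancel₀ (hc0 _), one_smul, Matrix.one_mulVec, vec_add_add_self]
  have hNM : M' * M = 1 := by
    apply matrix_ext_col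
    intro e
    rw [← Matrix.mulVec_mulVec, hc, Matrix.mulVec_smul, hcol, smul_smul, vec_add_add_self,
      mul_inv_cancel₀ (hc0 _), one_smul, Matrix.one_mulVec]
  exact ⟨⟨M, M', hMN, hNM⟩, rfl⟩

lemma Shifted.inv_unit {w : (Matrix (Fin n → Fin 2) (Fin n → Fin 2) ℂ)ˣ} {t : Fin n → Fin 2}
    (hW : Shifted (w : Matrix (Fin n → Fin 2) (Fin n → Fin 2) ℂ) t) :
    Shifted ((w⁻¹ : (Matrix (Fin n → Fin 2) (Fin n → Fin 2) ℂ)ˣ) :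
      Matrix (Fin n → Fin 2) (Fin n → Fin 2) ℂ) t := by
  intro e
  obtain ⟨c, hc0, hc⟩ := hW (e + t)
  rw [vec_add_add_self] at hc
  refine ⟨c⁻¹, inv_ne_zero hc0, ?_⟩
  have h2 : c • ((w⁻¹ : (Matrix (Fin n → Fin 2) (Fin n → Fin 2) ℂ)ˣ) :
      Matrix (Fin n → Fin 2) (Fin n → Fin 2) ℂ).mulVec (Pi.single e 1) = (Pi.single (e + t) 1 : (Fin n → Fin 2) → ℂ) := by
    rw [← Matrix.mulVec_smul, ← hc, Matrix.mulVec_mulVec, ← Units.val_mul, inv_mul_cancel,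
      Units.val_one, Matrix.one_mulVec]
  rw [← h2, smul_smul, inv_mul_cancel₀ hc0, one_smul]

lemma Shifted.isDiag {M : Matrix (Fin n → Fin 2) (Fin n → Fin 2) ℂ}
    (hM : Shifted M 0) : M.IsDiag := by
  intro f e hfe
  obtain ⟨c, hc0, hc⟩ := hM e
  rw [add_zero] at hc
  have := congrFun hc f
  simp only [Matrix.mulVec_single, MulOpposite.op_one, one_smul, Matrix.col_apply, mul_one, Pi.smul_apply, smul_eq_mul] at this
  rw [this, Pi.single_eq_of_ne hfe, mul_zero]

lemma XP_shifted (N n : ℕ) (p : ℤ) (x z : Fin n → ℤ) :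
    Shifted (XP N n p x z) (fun i => par (x i)) := by
  have key := fun i => qubit_entry N (x i) (z i)
  choose d hd0 hd using key
  intro e
  refine ⟨(omN N) ^ p * ∏ i, d i (e i),
    mul_ne_zero (zpow_ne_zero _ (omN_ne_zero N))
      (Finset.prod_ne_zero_iff.2 fun i _ => hd0 i (e i)), ?_⟩
  funext f
  rw [Matrix.mulVec_single]
  simp only [XP, MulOpposite.op_one, one_smul, Matrix.col_apply, Matrix.of_apply, mul_one, Pi.smul_apply, Pi.single_apply, smul_eq_mul]
  by_cases hf : f = e + fun i => par (x i)
  · rw [if_pos hf, mul_one]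
    congr 1
    apply Finset.prod_congr rfl
    intro i _
    rw [hd i (f i) (e i), if_pos]
    exact congrFun hf i
  · rw [if_neg hf, mul_zero]
    have : ∃ i, f i ≠ e i + par (x i) := by
      by_contra hcon
      push_neg at hcon
      exact hf (funext hcon)
    obtain ⟨i, hi⟩ := this
    rw [Finset.prod_eq_zero (Finset.mem_univ i), mul_zero]
    rw [hd i (f i) (e i), if_neg hi]

end OrbitAux

namespace OrbitAux

lemma shifted_ofFn_prod {n : ℕ} : ∀ (r : ℕ) (F : Fin r → Matrix (Fin n → Fin 2) (Fin n → Fin 2) ℂ)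
    (T : Fin r → Fin n → Fin 2), (∀ i, Shifted (F i) (T i)) →
    Shifted (List.ofFn F).prod (∑ i, T i) := by
  intro r
  induction r with
  | zero => intro F T h; simpa using Shifted.one
  | succ m ih =>
      intro F T h
      rw [List.ofFn_succ, List.prod_cons, Fin.sum_univ_succ]
      exact (h 0).mul (ih _ _ fun i => h i.succ)

end OrbitAux

open OrbitAux

/-- **Codewords as orbits**: if every diagonal element of the group `G` generated by
non-diagonal XP operators `A₀,…,A_{r−1}` and a set `S_Z` of diagonal XP operators fixes the
basis state `|e⟩`, then the orbit state `O|e⟩ = ∑_v (∏_i A_i^{v i})|e⟩` is fixed by every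
element of `G`. -/
theorem orbit_state_stabilised (N n r : ℕ) (hN : 2 ≤ N) (hn : 1 ≤ n)
    (A : Fin r → Matrix (Fin n → Fin 2) (Fin n → Fin 2) ℂ)
    (hA : ∀ i, ∃ p : ℤ, ∃ x z : Fin n → ℤ, IsBinary x ∧ A i = XP N n p x z)
    (SZ : Set (Matrix (Fin n → Fin 2) (Fin n → Fin 2) ℂ))
    (hSZ : ∀ B ∈ SZ, ∃ p : ℤ, ∃ z : Fin n → ℤ, B = XP N n p 0 z)
    (G : Subgroup (Matrix (Fin n → Fin 2) (Fin n → Fin 2) ℂ)ˣ)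
    (hG : G = Subgroup.closure
      {g : (Matrix (Fin n → Fin 2) (Fin n → Fin 2) ℂ)ˣ | (g : Matrix _ _ ℂ) ∈ Set.range A ∪ SZ})
    (e : Fin n → Fin 2)
    (he : ∀ g ∈ G, Matrix.IsDiag ((g : (Matrix (Fin n → Fin 2) (Fin n → Fin 2) ℂ)ˣ) :
        Matrix (Fin n → Fin 2) (Fin n → Fin 2) ℂ) →
      ((g : Matrix (Fin n → Fin 2) (Fin n → Fin 2) ℂ)).mulVec (Pi.single e 1) = Pi.single e 1) :
    ∀ g ∈ G,
      ((g : Matrix (Fin n → Fin 2) (Fin n → Fin 2) ℂ)).mulVec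
        (∑ v : Fin r → Fin 2,
          ((List.ofFn fun i => A i ^ (v i : ℕ)).prod).mulVec (Pi.single e 1)) =
      ∑ v : Fin r → Fin 2,
        ((List.ofFn fun i => A i ^ (v i : ℕ)).prod).mulVec (Pi.single e 1) := by
  classical
  subst hG
  -- shifts of the generators `A i`
  have hAshift : ∀ i, ∃ t : Fin n → Fin 2, Shifted (A i) t := by
    intro i
    obtain ⟨p, x, z, _, hAi⟩ := hA i
    exact ⟨fun j => par (x j), hAi ▸ XP_shifted N n p x z⟩
  choose tA hAshiftA using hAshift
  -- units lying over the `A i`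
  choose a ha using fun i => (hAshiftA i).isUnit
  have haS : ∀ i, a i ∈ Subgroup.closure
      {g : (Matrix (Fin n → Fin 2) (Fin n → Fin 2) ℂ)ˣ | (g : Matrix _ _ ℂ) ∈ Set.range A ∪ SZ} :=
    fun i => Subgroup.subset_closure (Or.inl ⟨i, (ha i).symm⟩)
  -- the products over bit strings
  obtain ⟨Mv, hMvdef⟩ : ∃ f : (Fin r → Fin 2) → Matrix (Fin n → Fin 2) (Fin n → Fin 2) ℂ,
      f = fun v => (List.ofFn fun i => A i ^ (v i : ℕ)).prod := ⟨_, rfl⟩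
  obtain ⟨uv, huvdef⟩ : ∃ f : (Fin r → Fin 2) → (Matrix (Fin n → Fin 2) (Fin n → Fin 2) ℂ)ˣ,
      f = fun v => (List.ofFn fun i => a i ^ (v i : ℕ)).prod := ⟨_, rfl⟩
  obtain ⟨tM, htMdef⟩ : ∃ f : (Fin r → Fin 2) → (Fin n → Fin 2),
      f = fun v => ∑ i, (v i : ℕ) • tA i := ⟨_, rfl⟩
  have hMv_app : ∀ v, (List.ofFn fun i => A i ^ (v i : ℕ)).prod = Mv v := fun v => by
    rw [hMvdef]
  have huv_val : ∀ v, ((uv v : (Matrix (Fin n → Fin 2) (Fin n → Fin 2) ℂ)ˣ) :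
      Matrix (Fin n → Fin 2) (Fin n → Fin 2) ℂ) = Mv v := by
    intro v
    rw [huvdef, hMvdef]
    show (Units.coeHom (Matrix (Fin n → Fin 2) (Fin n → Fin 2) ℂ))
      (List.ofFn fun i => a i ^ (v i : ℕ)).prod = _
    rw [map_list_prod, List.map_ofFn]
    have hfun : ((Units.coeHom (Matrix (Fin n → Fin 2) (Fin n → Fin 2) ℂ)) ∘
        fun i => a i ^ (v i : ℕ)) = fun i => A i ^ (v i : ℕ) := by
      funext i
      simp [Function.comp, ha i]
    rw [hfun]
  have huv_mem : ∀ v, uv v ∈ Subgroup.closure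
      {g : (Matrix (Fin n → Fin 2) (Fin n → Fin 2) ℂ)ˣ | (g : Matrix _ _ ℂ) ∈ Set.range A ∪ SZ} := by
    intro v
    rw [huvdef]
    apply list_prod_mem
    intro x hx
    rw [List.mem_ofFn] at hx
    obtain ⟨i, rfl⟩ := hx
    exact pow_mem (haS i) _
  have hMvshift : ∀ v, Shifted (Mv v) (tM v) := by
    intro v
    rw [hMvdef, htMdef]
    exact shifted_ofFn_prod r _ _ fun i => (hAshiftA i).pow _
  have htM : ∀ (v : Fin r → Fin 2) (j : Fin r), tM (v + (Pi.single j 1 : Fin r → Fin 2)) = tA j + tM v := by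
    intro v j
    rw [htMdef]
    have hterm : ∀ i, (((v + (Pi.single j 1 : Fin r → Fin 2)) i : Fin 2) : ℕ) • tA i
        = (if i = j then tA j else 0) + (v i : ℕ) • tA i := by
      intro i
      by_cases hij : i = j
      · subst hij
        rw [if_pos rfl]
        simp only [Pi.add_apply, Pi.single_eq_same]
        have h2 : v i = 0 ∨ v i = 1 := by omega
        rcases h2 with h | h <;> rw [h]
        · norm_num
        · rw [show (((1 + 1 : Fin 2) : ℕ)) = 0 from rfl, zero_smul,
            show ((1 : Fin 2) : ℕ) = 1 from rfl, one_smul, vec_add_self]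
      · rw [if_neg hij]
        simp [Pi.single_eq_of_ne hij]
    calc (∑ i, (((v + (Pi.single j 1 : Fin r → Fin 2)) i : Fin 2) : ℕ) • tA i)
        = ∑ i, ((if i = j then tA j else 0) + (v i : ℕ) • tA i) :=
          Finset.sum_congr rfl fun i _ => hterm i
      _ = (∑ i, if i = j then tA j else 0) + ∑ i, (v i : ℕ) • tA i :=
          Finset.sum_add_distrib
      _ = tA j + ∑ i, (v i : ℕ) • tA i := by rw [Finset.sum_ite_eq' Finset.univ j
          (fun _ => tA j), if_pos (Finset.mem_univ j)]
  -- the key exchange step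
  have key : ∀ (w : (Matrix (Fin n → Fin 2) (Fin n → Fin 2) ℂ)ˣ),
      w ∈ Subgroup.closure
        {g : (Matrix (Fin n → Fin 2) (Fin n → Fin 2) ℂ)ˣ | (g : Matrix _ _ ℂ) ∈ Set.range A ∪ SZ} →
      ∀ tw : Fin n → Fin 2, Shifted (w : Matrix (Fin n → Fin 2) (Fin n → Fin 2) ℂ) tw →
      ∀ v v' : Fin r → Fin 2, tM v' + (tw + tM v) = 0 →
      ((w : Matrix (Fin n → Fin 2) (Fin n → Fin 2) ℂ)).mulVec ((Mv v).mulVec (Pi.single e 1))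
        = (Mv v').mulVec (Pi.single e 1) := by
    intro w hw tw hws v v' hsum
    set D := (uv v')⁻¹ * w * uv v with hDdef
    have hDmem : D ∈ Subgroup.closure
        {g : (Matrix (Fin n → Fin 2) (Fin n → Fin 2) ℂ)ˣ | (g : Matrix _ _ ℂ) ∈ Set.range A ∪ SZ} :=
      mul_mem (mul_mem (inv_mem (huv_mem v')) hw) (huv_mem v)
    have hDval : ((D : (Matrix (Fin n → Fin 2) (Fin n → Fin 2) ℂ)ˣ) :
        Matrix (Fin n → Fin 2) (Fin n → Fin 2) ℂ)
        = (((uv v')⁻¹ : (Matrix (Fin n → Fin 2) (Fin n → Fin 2) ℂ)ˣ) :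
            Matrix (Fin n → Fin 2) (Fin n → Fin 2) ℂ) *
          (((w : Matrix (Fin n → Fin 2) (Fin n → Fin 2) ℂ)) * ((uv v :
            (Matrix (Fin n → Fin 2) (Fin n → Fin 2) ℂ)ˣ) :
            Matrix (Fin n → Fin 2) (Fin n → Fin 2) ℂ)) := by
      rw [hDdef, Units.val_mul, Units.val_mul, mul_assoc]
    have hDshift : Shifted ((D : (Matrix (Fin n → Fin 2) (Fin n → Fin 2) ℂ)ˣ) :
        Matrix (Fin n → Fin 2) (Fin n → Fin 2) ℂ) 0 := by
      have h1 : Shifted (((uv v')⁻¹ : (Matrix (Fin n → Fin 2) (Fin n → Fin 2) ℂ)ˣ) :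
          Matrix (Fin n → Fin 2) (Fin n → Fin 2) ℂ) (tM v') :=
        Shifted.inv_unit (by rw [huv_val]; exact hMvshift v')
      have h2 : Shifted (((uv v : (Matrix (Fin n → Fin 2) (Fin n → Fin 2) ℂ)ˣ)) :
          Matrix (Fin n → Fin 2) (Fin n → Fin 2) ℂ) (tM v) := by
        rw [huv_val]; exact hMvshift v
      have := h1.mul (hws.mul h2)
      rw [hsum] at this
      rw [hDval]
      exact this
    have hDe : ((D : (Matrix (Fin n → Fin 2) (Fin n → Fin 2) ℂ)ˣ) :
        Matrix (Fin n → Fin 2) (Fin n → Fin 2) ℂ).mulVec (Pi.single e 1) = Pi.single e 1 :=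
      he D hDmem hDshift.isDiag
    have hgroup : w * uv v = uv v' * D := by rw [hDdef]; group
    have step : ((w : Matrix (Fin n → Fin 2) (Fin n → Fin 2) ℂ)).mulVec
        ((Mv v).mulVec (Pi.single e 1))
        = (Mv v').mulVec (((D : (Matrix (Fin n → Fin 2) (Fin n → Fin 2) ℂ)ˣ) :
            Matrix (Fin n → Fin 2) (Fin n → Fin 2) ℂ).mulVec (Pi.single e 1)) := by
      rw [← huv_val v, ← huv_val v', Matrix.mulVec_mulVec, Matrix.mulVec_mulVec,
        ← Units.val_mul, ← Units.val_mul, hgroup]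
    rw [step, hDe]
  -- linearity of mulVec over the sum
  have hlin : ∀ (B : Matrix (Fin n → Fin 2) (Fin n → Fin 2) ℂ)
      (f : (Fin r → Fin 2) → (Fin n → Fin 2) → ℂ),
      B.mulVec (∑ v, f v) = ∑ v, B.mulVec (f v) := by
    intro B f
    exact map_sum B.mulVecLin f Finset.univ
  intro g hg
  simp only [hMv_app]
  induction hg using Subgroup.closure_induction with
  | mem x hx =>
      rcases hx with ⟨j, hj⟩ | hx
      · -- x lies over A j
        rw [hlin]
        have hstep : ∀ v : Fin r → Fin 2,
            ((x : Matrix (Fin n → Fin 2) (Fin n → Fin 2) ℂ)).mulVec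
              ((Mv v).mulVec (Pi.single e 1))
            = (Mv (v + (Pi.single j 1 : Fin r → Fin 2))).mulVec (Pi.single e 1) := by
          intro v
          refine key x (Subgroup.subset_closure (Or.inl ⟨j, hj⟩)) (tA j) ?_ v _ ?_
          · rw [show ((x : Matrix (Fin n → Fin 2) (Fin n → Fin 2) ℂ)) = A j from hj.symm ▸ rfl]
            exact hAshiftA j
          · rw [htM v j, vec_add_self]
        calc (∑ v, ((x : Matrix (Fin n → Fin 2) (Fin n → Fin 2) ℂ)).mulVec
              ((Mv v).mulVec (Pi.single e 1)))
            = ∑ v, (Mv (v + (Pi.single j 1 : Fin r → Fin 2))).mulVec (Pi.single e 1) :=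
              Finset.sum_congr rfl fun v _ => hstep v
          _ = ∑ v, (Mv v).mulVec (Pi.single e 1) := by
              exact Fintype.sum_equiv (Equiv.addRight ((Pi.single j 1 : Fin r → Fin 2)))
                (fun v => (Mv (v + (Pi.single j 1 : Fin r → Fin 2))).mulVec (Pi.single e 1))
                (fun v => (Mv v).mulVec (Pi.single e 1)) (fun v => rfl)
      · -- x lies over an element of SZ
        rw [hlin]
        refine Finset.sum_congr rfl fun v _ => ?_
        obtain ⟨p, z, hxz⟩ := hSZ _ hx
        refine key x (Subgroup.subset_closure (Or.inr hx)) 0 ?_ v v ?_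
        · have h0 : (fun i => par ((0 : Fin n → ℤ) i)) = (0 : Fin n → Fin 2) := by
            funext i; simp [par]
          rw [hxz]
          have := XP_shifted N n p 0 z
          rwa [h0] at this
        · rw [zero_add, vec_add_self]
  | one => rw [Units.val_one, Matrix.one_mulVec]
  | mul x y hx hy ihx ihy =>
      rw [Units.val_mul, ← Matrix.mulVec_mulVec, ihy, ihx]
  | inv x hx ih =>
      conv_lhs => rw [← ih]
      rw [Matrix.mulVec_mulVec, ← Units.val_mul, inv_mul_cancel, Units.val_one,
        Matrix.one_mulVec]
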